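/- For 0 ≤ δ ≤ φ < π/2, both earth pressure coefficients K_act and K_pass are positive. In particular K_act ≥ 2sec²φ(1 - sinφ) - 1 > 0. -/
import Mathlib


theorem earth_pressure_positive (φ δ : ℝ) (h0 : 0 ≤ δ) (h1 : δ ≤ φ)
    (h2 : φ < Real.pi / 2) :
    let Kact : ℝ := 2 * (1 / Real.cos φ) ^ 2 *
      (1 - Real.sqrt (1 - Real.cos φ ^ 2 * (1 / Real.cos δ) ^ 2)) - 1
    let Kpass : ℝ := 2 * (1 / Real.cos φ) ^ 2 *
      (1 + Real.sqrt (1 - Real.cos φ ^ 2 * (1 / Real.cos δ) ^ 2)) - 1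
    2 * (1 / Real.cos φ) ^ 2 * (1 - Real.sin φ) - 1 ≤ Kact ∧
    0 < 2 * (1 / Real.cos φ) ^ 2 * (1 - Real.sin φ) - 1 ∧
    0 < Kact ∧ 0 < Kpass := by
  intro Kact Kpass
  have hπ : 0 < Real.pi := Real.pi_pos
  have hφ0 : 0 ≤ φ := le_trans h0 h1
  have hc : 0 < Real.cos φ := Real.cos_pos_of_mem_Ioo ⟨by linarith, h2⟩
  have hcd : Real.cos φ ≤ Real.cos δ :=
    Real.cos_le_cos_of_nonneg_of_le_pi h0 (by linarith) h1
  have hd : 0 < Real.cos δ := lt_of_lt_of_le hc hcd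
  have hd1 : Real.cos δ ≤ 1 := Real.cos_le_one δ
  have hsnn : 0 ≤ Real.sin φ := Real.sin_nonneg_of_nonneg_of_le_pi hφ0 (by linarith)
  have hpyth := Real.sin_sq_add_cos_sq φ
  have hs1 : Real.sin φ < 1 := by nlinarith
  have h1d : (1:ℝ) ≤ (1 / Real.cos δ) ^ 2 := by
    have := one_le_one_div hd hd1
    nlinarith
  have hxle : 1 - Real.cos φ ^ 2 * (1 / Real.cos δ) ^ 2 ≤ Real.sin φ ^ 2 := by
    nlinarith [sq_nonneg (Real.cos φ)]
  have hsle : Real.sqrt (1 - Real.cos φ ^ 2 * (1 / Real.cos δ) ^ 2) ≤ Real.sin φ := by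
    calc Real.sqrt (1 - Real.cos φ ^ 2 * (1 / Real.cos δ) ^ 2)
        ≤ Real.sqrt (Real.sin φ ^ 2) := Real.sqrt_le_sqrt hxle
      _ = Real.sin φ := Real.sqrt_sq hsnn
  have hp : 0 < (1 / Real.cos φ) ^ 2 := by positivity
  have hinv : (1 / Real.cos φ) ^ 2 * Real.cos φ ^ 2 = 1 := by
    field_simp
  have key : Real.cos φ ^ 2 < 2 * (1 - Real.sin φ) := by
    nlinarith [sq_nonneg (1 - Real.sin φ)]
  have hbase : 0 < 2 * (1 / Real.cos φ) ^ 2 * (1 - Real.sin φ) - 1 := by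
    nlinarith [mul_lt_mul_of_pos_left key hp]
  have hle : 2 * (1 / Real.cos φ) ^ 2 * (1 - Real.sin φ) - 1 ≤ Kact := by
    show _ ≤ 2 * (1 / Real.cos φ) ^ 2 *
      (1 - Real.sqrt (1 - Real.cos φ ^ 2 * (1 / Real.cos δ) ^ 2)) - 1
    nlinarith
  refine ⟨hle, hbase, lt_of_lt_of_le hbase hle, ?_⟩
  show 0 < 2 * (1 / Real.cos φ) ^ 2 *
      (1 + Real.sqrt (1 - Real.cos φ ^ 2 * (1 / Real.cos δ) ^ 2)) - 1
  nlinarith [Real.sqrt_nonneg (1 - Real.cos φ ^ 2 * (1 / Real.cos δ) ^ 2)]
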